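/- Let φ be a CNF formula with variables x_1,…,x_n and clauses c_1,…,c_m in which each of the 2n literals x_i and ¬x_i occurs in at least one clause. Let G_φ be the finite simple graph on the 8n+m vertices {x_1,…,x_n, c_1,…,c_m, p_1,…,p_n, p̄_1,…,p̄_n, l_1,…,l_n, l̄_1,…,l̄_n, y_1,…,y_n, z_1,…,z_n, q_1,…,q_n, q̄_1,…,q̄_n} in which two distinct vertices are adjacent if and only if they belong together to one of the following sets: C_r = {c_1,…,c_m, p_1,…,p_n, p̄_1,…,p̄_n}; and for each 1 ≤ i ≤ n: C_{x_i} = {x_i, p_i, p̄_i}, C_{y_i} = {y_i, x_i}, C_{z_i} = {y_i, z_i}, C_{q_i} = {q_i, l_i}, C_{q̄_i} = {q̄_i, l̄_i}, C_{l_i} = {l_i, p_i} ∪ Cl(x_i), and C_{l̄_i} = {l̄_i, p̄_i} ∪ Cl(¬x_i), where Cl(x_i) (respectively Cl(¬x_i)) is the set of clause vertices c_j such that the literal x_i (respectively ¬x_i) occurs in clause c_j. Let S := {x_1,…,x_n, y_1,…,y_n} and X := {z_1,…,z_n, p_1,…,p_n, p̄_1,…,p̄_n, c_1,…,c_m}.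 Then φ has a satisfying assignment if and only if G_φ has a minimal dominating set D with S ⊆ D and D ∩ X = ∅. -/

import Mathlib

/-- The closed neighborhood `N[x]` of a vertex. -/
def closedNbhd {V : Type*} (G : SimpleGraph V) (x : V) : Set V := insert x (G.neighborSet x)

/-- `N[S] = ⋃ x ∈ S, N[x]`. -/
def closedNbhdSet {V : Type*} (G : SimpleGraph V) (S : Set V) : Set V :=
  ⋃ x ∈ S, closedNbhd G x

/-- `D` is a dominating set: `N[D] = V`. -/
def IsDomSet {V : Type*} (G : SimpleGraph V) (D : Set V) : Prop :=
  closedNbhdSet G D = Set.univ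

/-- Minimal dominating set: dominating, and no proper subset dominates. -/
def IsMinDomSet {V : Type*} (G : SimpleGraph V) (D : Set V) : Prop :=
  IsDomSet G D ∧ ∀ D' : Set V, D' ⊂ D → ¬ IsDomSet G D'

/-- The vertices of the gadget graph `G_φ`: variable vertices `x_i`, clause vertices
`c_j`, and the auxiliary vertices `p_i, p̄_i, l_i, l̄_i, y_i, z_i, q_i, q̄_i`. -/
inductive GVtx (n m : ℕ) : Type
  | xv (i : Fin n) | cv (j : Fin m) | pv (i : Fin n) | pbv (i : Fin n)
  | lv (i : Fin n) | lbv (i : Fin n) | yv (i : Fin n) | zv (i : Fin n)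
  | qv (i : Fin n) | qbv (i : Fin n)

namespace GVtx

variable {n m : ℕ}

/-- `C_r = {c_1,…,c_m, p_1,…,p_n, p̄_1,…,p̄_n}`. -/
def CrS (n m : ℕ) : Set (GVtx n m) :=
  {v | (∃ j, v = cv j) ∨ (∃ i, v = pv i) ∨ (∃ i, v = pbv i)}

/-- `C_{x_i} = {x_i, p_i, p̄_i}`. -/
def CxS (i : Fin n) : Set (GVtx n m) := {xv i, pv i, pbv i}

/-- `C_{y_i} = {y_i, x_i}`. -/
def CyS (i : Fin n) : Set (GVtx n m) := {yv i, xv i}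

/-- `C_{z_i} = {y_i, z_i}`. -/
def CzS (i : Fin n) : Set (GVtx n m) := {yv i, zv i}

/-- `C_{q_i} = {q_i, l_i}`. -/
def CqS (i : Fin n) : Set (GVtx n m) := {qv i, lv i}

/-- `C_{q̄_i} = {q̄_i, l̄_i}`. -/
def CqbS (i : Fin n) : Set (GVtx n m) := {qbv i, lbv i}

/-- `C_{l_i} = {l_i, p_i} ∪ Cl(x_i)`, where `Cl(x_i)` is the set of clause vertices
whose clause contains the positive literal `x_i`. -/
def ClS (cls : Fin m → Finset (Fin n × Bool)) (i : Fin n) : Set (GVtx n m) :=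
  {lv i, pv i} ∪ {v | ∃ j, v = cv j ∧ (i, true) ∈ cls j}

/-- `C_{l̄_i} = {l̄_i, p̄_i} ∪ Cl(¬x_i)`, where `Cl(¬x_i)` is the set of clause vertices
whose clause contains the negative literal `¬x_i`. -/
def ClbS (cls : Fin m → Finset (Fin n × Bool)) (i : Fin n) : Set (GVtx n m) :=
  {lbv i, pbv i} ∪ {v | ∃ j, v = cv j ∧ (i, false) ∈ cls j}

/-- `a` and `b` belong together to one of the listed sets. -/
def together (cls : Fin m → Finset (Fin n × Bool)) (a b : GVtx n m) : Prop :=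
  (a ∈ CrS n m ∧ b ∈ CrS n m) ∨
  ∃ i : Fin n,
    (a ∈ CxS i ∧ b ∈ CxS i) ∨ (a ∈ CyS i ∧ b ∈ CyS i) ∨ (a ∈ CzS i ∧ b ∈ CzS i) ∨
    (a ∈ CqS i ∧ b ∈ CqS i) ∨ (a ∈ CqbS i ∧ b ∈ CqbS i) ∨
    (a ∈ ClS cls i ∧ b ∈ ClS cls i) ∨ (a ∈ ClbS cls i ∧ b ∈ ClbS cls i)

/-- The gadget graph `G_φ`: two distinct vertices are adjacent iff they belong
together to one of the listed sets. -/
def gadget (cls : Fin m → Finset (Fin n × Bool)) : SimpleGraph (GVtx n m) :=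
  SimpleGraph.fromRel (together cls)

end GVtx

open GVtx

section Helpers
variable {n m : ℕ} (cls : Fin m → Finset (Fin n × Bool))

lemma isDomSet_iff {V : Type*} (G : SimpleGraph V) (D : Set V) :
    IsDomSet G D ↔ ∀ v, ∃ d ∈ D, v = d ∨ G.Adj d v := by
  unfold IsDomSet closedNbhdSet closedNbhd
  rw [Set.eq_univ_iff_forall]
  simp [SimpleGraph.mem_neighborSet, eq_comm]

lemma together_symm {a b : GVtx n m} (h : together cls a b) : together cls b a := by
  obtain (⟨h1, h2⟩ | ⟨i, h⟩) := h
  · exact Or.inl ⟨h2, h1⟩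
  · exact Or.inr ⟨i, by tauto⟩

lemma adj_iff (a b : GVtx n m) :
    (gadget cls).Adj a b ↔ a ≠ b ∧ together cls a b := by
  constructor
  · rintro ⟨h, hc | hc⟩
    · exact ⟨h, hc⟩
    · exact ⟨h, together_symm cls hc⟩
  · rintro ⟨h, hc⟩; exact ⟨h, Or.inl hc⟩

lemma nbhd_x {v : GVtx n m} {i : Fin n} (h : (gadget cls).Adj v (xv i)) :
    v = yv i ∨ v = pv i ∨ v = pbv i := by
  rw [adj_iff] at h
  obtain ⟨hne, ht⟩ := h
  simp only [together, CrS, CxS, CyS, CzS, CqS, CqbS, ClS, ClbS,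
    Set.mem_setOf_eq, Set.mem_insert_iff, Set.mem_singleton_iff, Set.mem_union] at ht
  aesop

lemma nbhd_z {v : GVtx n m} {i : Fin n} (h : (gadget cls).Adj v (zv i)) :
    v = yv i := by
  rw [adj_iff] at h
  obtain ⟨hne, ht⟩ := h
  simp only [together, CrS, CxS, CyS, CzS, CqS, CqbS, ClS, ClbS,
    Set.mem_setOf_eq, Set.mem_insert_iff, Set.mem_singleton_iff, Set.mem_union] at ht
  aesop

lemma nbhd_q {v : GVtx n m} {i : Fin n} (h : (gadget cls).Adj v (qv i)) :
    v = lv i := by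
  rw [adj_iff] at h
  obtain ⟨hne, ht⟩ := h
  simp only [together, CrS, CxS, CyS, CzS, CqS, CqbS, ClS, ClbS,
    Set.mem_setOf_eq, Set.mem_insert_iff, Set.mem_singleton_iff, Set.mem_union] at ht
  aesop

lemma nbhd_qb {v : GVtx n m} {i : Fin n} (h : (gadget cls).Adj v (qbv i)) :
    v = lbv i := by
  rw [adj_iff] at h
  obtain ⟨hne, ht⟩ := h
  simp only [together, CrS, CxS, CyS, CzS, CqS, CqbS, ClS, ClbS,
    Set.mem_setOf_eq, Set.mem_insert_iff, Set.mem_singleton_iff, Set.mem_union] at ht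
  aesop

lemma nbhd_p {v : GVtx n m} {i : Fin n} (h : (gadget cls).Adj v (pv i)) :
    (∃ j, v = cv j) ∨ (∃ k, v = pv k) ∨ (∃ k, v = pbv k) ∨ v = xv i ∨ v = lv i := by
  rw [adj_iff] at h
  obtain ⟨hne, ht⟩ := h
  simp only [together, CrS, CxS, CyS, CzS, CqS, CqbS, ClS, ClbS,
    Set.mem_setOf_eq, Set.mem_insert_iff, Set.mem_singleton_iff, Set.mem_union] at ht
  aesop

lemma nbhd_pb {v : GVtx n m} {i : Fin n} (h : (gadget cls).Adj v (pbv i)) :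
    (∃ j, v = cv j) ∨ (∃ k, v = pv k) ∨ (∃ k, v = pbv k) ∨ v = xv i ∨ v = lbv i := by
  rw [adj_iff] at h
  obtain ⟨hne, ht⟩ := h
  simp only [together, CrS, CxS, CyS, CzS, CqS, CqbS, ClS, ClbS,
    Set.mem_setOf_eq, Set.mem_insert_iff, Set.mem_singleton_iff, Set.mem_union] at ht
  aesop

lemma nbhd_c {v : GVtx n m} {j : Fin m} (h : (gadget cls).Adj v (cv j)) :
    (∃ j', v = cv j') ∨ (∃ k, v = pv k) ∨ (∃ k, v = pbv k) ∨
    (∃ i, v = lv i ∧ (i, true) ∈ cls j) ∨ (∃ i, v = lbv i ∧ (i, false) ∈ cls j) := by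
  rw [adj_iff] at h
  obtain ⟨hne, ht⟩ := h
  simp only [together, CrS, CxS, CyS, CzS, CqS, CqbS, ClS, ClbS,
    Set.mem_setOf_eq, Set.mem_insert_iff, Set.mem_singleton_iff, Set.mem_union] at ht
  aesop

end Helpers

section AdjPos
variable {n m : ℕ} (cls : Fin m → Finset (Fin n × Bool))

lemma adj_xy (i : Fin n) : (gadget cls).Adj (xv i) (yv i) := by
  rw [adj_iff]
  exact ⟨by simp, Or.inr ⟨i, by simp [CxS, CyS, CzS, CqS, CqbS, ClS, ClbS]⟩⟩

lemma adj_yz (i : Fin n) : (gadget cls).Adj (yv i) (zv i) := by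
  rw [adj_iff]
  exact ⟨by simp, Or.inr ⟨i, by simp [CxS, CyS, CzS, CqS, CqbS, ClS, ClbS]⟩⟩

lemma adj_xp (i : Fin n) : (gadget cls).Adj (xv i) (pv i) := by
  rw [adj_iff]
  exact ⟨by simp, Or.inr ⟨i, by simp [CxS, CyS, CzS, CqS, CqbS, ClS, ClbS]⟩⟩

lemma adj_xpb (i : Fin n) : (gadget cls).Adj (xv i) (pbv i) := by
  rw [adj_iff]
  exact ⟨by simp, Or.inr ⟨i, by simp [CxS, CyS, CzS, CqS, CqbS, ClS, ClbS]⟩⟩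

lemma adj_lp (i : Fin n) : (gadget cls).Adj (lv i) (pv i) := by
  rw [adj_iff]
  exact ⟨by simp, Or.inr ⟨i, by simp [CxS, CyS, CzS, CqS, CqbS, ClS, ClbS]⟩⟩

lemma adj_lbpb (i : Fin n) : (gadget cls).Adj (lbv i) (pbv i) := by
  rw [adj_iff]
  exact ⟨by simp, Or.inr ⟨i, by simp [CxS, CyS, CzS, CqS, CqbS, ClS, ClbS]⟩⟩

lemma adj_lq (i : Fin n) : (gadget cls).Adj (lv i) (qv i) := by
  rw [adj_iff]
  exact ⟨by simp, Or.inr ⟨i, by simp [CxS, CyS, CzS, CqS, CqbS, ClS, ClbS]⟩⟩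

lemma adj_lbqb (i : Fin n) : (gadget cls).Adj (lbv i) (qbv i) := by
  rw [adj_iff]
  exact ⟨by simp, Or.inr ⟨i, by simp [CxS, CyS, CzS, CqS, CqbS, ClS, ClbS]⟩⟩

lemma adj_lc {i : Fin n} {j : Fin m} (h : (i, true) ∈ cls j) :
    (gadget cls).Adj (lv i) (cv j) := by
  rw [adj_iff]
  refine ⟨by simp, Or.inr ⟨i, ?_⟩⟩
  refine Or.inr (Or.inr (Or.inr (Or.inr (Or.inr (Or.inl ⟨by simp [ClS], ?_⟩)))))
  exact Or.inr ⟨j, rfl, h⟩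

lemma adj_lbc {i : Fin n} {j : Fin m} (h : (i, false) ∈ cls j) :
    (gadget cls).Adj (lbv i) (cv j) := by
  rw [adj_iff]
  refine ⟨by simp, Or.inr ⟨i, ?_⟩⟩
  refine Or.inr (Or.inr (Or.inr (Or.inr (Or.inr (Or.inr ⟨by simp [ClbS], ?_⟩)))))
  exact Or.inr ⟨j, rfl, h⟩

end AdjPos

/-- A CNF formula `φ` is encoded by its clauses `cls j`, each a nonempty finite set of
literals, a literal being a pair `(i, b)` meaning `x_i` if `b = true` and `¬x_i` if
`b = false`; each of the `2n` literals occurs in at least one clause. Then `φ` is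
satisfiable iff the gadget graph `G_φ` has a minimal dominating set `D` with
`S = {x_1,…,x_n, y_1,…,y_n} ⊆ D` and
`D ∩ X = ∅` for `X = {z_1,…,z_n, p_1,…,p_n, p̄_1,…,p̄_n, c_1,…,c_m}`. -/
theorem stmt8 {n m : ℕ} (cls : Fin m → Finset (Fin n × Bool))
    (hne : ∀ j, (cls j).Nonempty)
    (hocc : ∀ (i : Fin n) (b : Bool), ∃ j, (i, b) ∈ cls j) :
    (∃ f : Fin n → Bool, ∀ j, ∃ p ∈ cls j, f p.1 = p.2) ↔
    (∃ D : Set (GVtx n m), IsMinDomSet (gadget cls) D ∧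
      ({v | ∃ i, v = xv i} ∪ {v | ∃ i, v = yv i}) ⊆ D ∧
      D ∩ ({v | ∃ i, v = zv i} ∪ {v | ∃ i, v = pv i} ∪ {v | ∃ i, v = pbv i} ∪
        {v | ∃ j, v = cv j}) = ∅) := by
  constructor
  · rintro ⟨f, hf⟩
    refine ⟨{v | (∃ i, v = xv i) ∨ (∃ i, v = yv i) ∨ (∃ i, v = lv i ∧ f i = true) ∨
        (∃ i, v = lbv i ∧ f i = false) ∨ (∃ i, v = qv i ∧ f i = false) ∨
        (∃ i, v = qbv i ∧ f i = true)}, ⟨?_, ?_⟩, ?_, ?_⟩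
    · -- dominating
      rw [isDomSet_iff]
      intro v
      cases v with
      | xv i => exact ⟨xv i, Or.inl ⟨i, rfl⟩, Or.inl rfl⟩
      | yv i => exact ⟨yv i, Or.inr (Or.inl ⟨i, rfl⟩), Or.inl rfl⟩
      | zv i => exact ⟨yv i, Or.inr (Or.inl ⟨i, rfl⟩), Or.inr (adj_yz cls i)⟩
      | pv i => exact ⟨xv i, Or.inl ⟨i, rfl⟩, Or.inr (adj_xp cls i)⟩
      | pbv i => exact ⟨xv i, Or.inl ⟨i, rfl⟩, Or.inr (adj_xpb cls i)⟩
      | cv j =>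
        obtain ⟨⟨i, b⟩, hp, hfb⟩ := hf j
        cases b with
        | true =>
          exact ⟨lv i, Or.inr (Or.inr (Or.inl ⟨i, rfl, hfb⟩)), Or.inr (adj_lc cls hp)⟩
        | false =>
          exact ⟨lbv i, Or.inr (Or.inr (Or.inr (Or.inl ⟨i, rfl, hfb⟩))),
            Or.inr (adj_lbc cls hp)⟩
      | lv i =>
        cases hfi : f i with
        | true => exact ⟨lv i, Or.inr (Or.inr (Or.inl ⟨i, rfl, hfi⟩)), Or.inl rfl⟩
        | false =>
          exact ⟨qv i, Or.inr (Or.inr (Or.inr (Or.inr (Or.inl ⟨i, rfl, hfi⟩)))),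
            Or.inr (adj_lq cls i).symm⟩
      | lbv i =>
        cases hfi : f i with
        | false => exact ⟨lbv i, Or.inr (Or.inr (Or.inr (Or.inl ⟨i, rfl, hfi⟩))), Or.inl rfl⟩
        | true =>
          exact ⟨qbv i, Or.inr (Or.inr (Or.inr (Or.inr (Or.inr ⟨i, rfl, hfi⟩)))),
            Or.inr (adj_lbqb cls i).symm⟩
      | qv i =>
        cases hfi : f i with
        | false =>
          exact ⟨qv i, Or.inr (Or.inr (Or.inr (Or.inr (Or.inl ⟨i, rfl, hfi⟩)))), Or.inl rfl⟩
        | true =>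
          exact ⟨lv i, Or.inr (Or.inr (Or.inl ⟨i, rfl, hfi⟩)), Or.inr (adj_lq cls i)⟩
      | qbv i =>
        cases hfi : f i with
        | true =>
          exact ⟨qbv i, Or.inr (Or.inr (Or.inr (Or.inr (Or.inr ⟨i, rfl, hfi⟩)))), Or.inl rfl⟩
        | false =>
          exact ⟨lbv i, Or.inr (Or.inr (Or.inr (Or.inl ⟨i, rfl, hfi⟩))),
            Or.inr (adj_lbqb cls i)⟩
    · -- minimal
      intro D' hsub hdom
      rw [isDomSet_iff] at hdom
      obtain ⟨d, hdD, hdnD'⟩ := Set.exists_of_ssubset hsub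
      rcases hdD with ⟨i, rfl⟩ | ⟨i, rfl⟩ | ⟨i, rfl, hfi⟩ | ⟨i, rfl, hfi⟩ |
        ⟨i, rfl, hfi⟩ | ⟨i, rfl, hfi⟩
      · -- d = xv i
        cases hfi : f i with
        | true =>
          obtain ⟨d', hd'D', hc⟩ := hdom (pbv i)
          have hd'D := hsub.subset hd'D'
          rcases hc with rfl | hadj
          · simp at hd'D
          · rcases nbhd_pb cls hadj with ⟨k, rfl⟩ | ⟨k, rfl⟩ | ⟨k, rfl⟩ | rfl | rfl
            · simp at hd'D
            · simp at hd'D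
            · simp at hd'D
            · exact hdnD' hd'D'
            · simp [hfi] at hd'D
        | false =>
          obtain ⟨d', hd'D', hc⟩ := hdom (pv i)
          have hd'D := hsub.subset hd'D'
          rcases hc with rfl | hadj
          · simp at hd'D
          · rcases nbhd_p cls hadj with ⟨k, rfl⟩ | ⟨k, rfl⟩ | ⟨k, rfl⟩ | rfl | rfl
            · simp at hd'D
            · simp at hd'D
            · simp at hd'D
            · exact hdnD' hd'D'
            · simp [hfi] at hd'D
      · -- d = yv i
        obtain ⟨d', hd'D', hc⟩ := hdom (zv i)
        have hd'D := hsub.subset hd'D'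
        rcases hc with rfl | hadj
        · simp at hd'D
        · exact hdnD' (nbhd_z cls hadj ▸ hd'D')
      · -- d = lv i, f i = true
        obtain ⟨d', hd'D', hc⟩ := hdom (qv i)
        have hd'D := hsub.subset hd'D'
        rcases hc with rfl | hadj
        · simp [hfi] at hd'D
        · exact hdnD' (nbhd_q cls hadj ▸ hd'D')
      · -- d = lbv i, f i = false
        obtain ⟨d', hd'D', hc⟩ := hdom (qbv i)
        have hd'D := hsub.subset hd'D'
        rcases hc with rfl | hadj
        · simp [hfi] at hd'D
        · exact hdnD' (nbhd_qb cls hadj ▸ hd'D')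
      · -- d = qv i, f i = false
        obtain ⟨d', hd'D', hc⟩ := hdom (qv i)
        have hd'D := hsub.subset hd'D'
        rcases hc with rfl | hadj
        · exact hdnD' hd'D'
        · have := nbhd_q cls hadj
          subst this
          simp [hfi] at hd'D
      · -- d = qbv i, f i = true
        obtain ⟨d', hd'D', hc⟩ := hdom (qbv i)
        have hd'D := hsub.subset hd'D'
        rcases hc with rfl | hadj
        · exact hdnD' hd'D'
        · have := nbhd_qb cls hadj
          subst this
          simp [hfi] at hd'D
    · -- S ⊆ D
      rintro v (⟨i, rfl⟩ | ⟨i, rfl⟩)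
      · exact Or.inl ⟨i, rfl⟩
      · exact Or.inr (Or.inl ⟨i, rfl⟩)
    · -- D ∩ X = ∅
      rw [Set.eq_empty_iff_forall_notMem]
      rintro v ⟨hvD, hvX⟩
      rcases hvX with ((⟨i, rfl⟩ | ⟨i, rfl⟩) | ⟨i, rfl⟩) | ⟨j, rfl⟩ <;> simp at hvD
  · rintro ⟨D, ⟨hdom, hmin⟩, hS, hX⟩
    classical
    have hxD : ∀ i, xv i ∈ D := fun i => hS (Or.inl ⟨i, rfl⟩)
    have hyD : ∀ i, yv i ∈ D := fun i => hS (Or.inr ⟨i, rfl⟩)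
    have hnX : ∀ v ∈ D, v ∉ ({v | ∃ i, v = zv i} ∪ {v | ∃ i, v = pv i} ∪
        {v | ∃ i, v = pbv i} ∪ {v | ∃ j, v = cv j} : Set (GVtx n m)) := by
      intro v hv hvX
      have : v ∈ D ∩ _ := ⟨hv, hvX⟩
      rw [hX] at this
      exact this
    have hcD : ∀ j, cv j ∉ D := fun j hj => hnX _ hj (by simp)
    have key : ∀ i, lv i ∈ D → lbv i ∈ D → False := by
      intro i hl hlb
      apply hmin (D \ {xv i}) (Set.sdiff_singleton_ssubset.2 (hxD i))
      rw [isDomSet_iff] at hdom ⊢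
      intro v
      obtain ⟨d, hdD, hc⟩ := hdom v
      by_cases hdx : d = xv i
      · subst hdx
        rcases hc with rfl | hadj
        · exact ⟨yv i, ⟨hyD i, by simp⟩, Or.inr (adj_xy cls i).symm⟩
        · rcases nbhd_x cls hadj.symm with rfl | rfl | rfl
          · exact ⟨yv i, ⟨hyD i, by simp⟩, Or.inl rfl⟩
          · exact ⟨lv i, ⟨hl, by simp⟩, Or.inr (adj_lp cls i)⟩
          · exact ⟨lbv i, ⟨hlb, by simp⟩, Or.inr (adj_lbpb cls i)⟩
      · exact ⟨d, ⟨hdD, by simp [hdx]⟩, hc⟩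
    refine ⟨fun i => decide (lv i ∈ D), fun j => ?_⟩
    rw [isDomSet_iff] at hdom
    obtain ⟨d, hdD, hc⟩ := hdom (cv j)
    rcases hc with rfl | hadj
    · exact absurd hdD (hcD j)
    · rcases nbhd_c cls hadj with ⟨j', rfl⟩ | ⟨k, rfl⟩ | ⟨k, rfl⟩ | ⟨i, rfl, hlit⟩ |
        ⟨i, rfl, hlit⟩
      · exact absurd hdD (hcD j')
      · exact absurd (hnX _ hdD) (by simp)
      · exact absurd (hnX _ hdD) (by simp)
      · exact ⟨(i, true), hlit, by simpa using hdD⟩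
      · refine ⟨(i, false), hlit, ?_⟩
        have : lv i ∉ D := fun h => key i h hdD
        simpa using this
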